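/- Let 2 ≤ p < ∞ and let φ: (0,∞)×ℝⁿ → ℂ be such that φ, ∂_tφ ∈ V^p. Then for all t > τ > 0, ‖φ(t,·) − φ(τ,·)‖_{L^p(ℝⁿ)} ≲ (t−τ)^{1/2} ‖∂_tφ‖_{V^p}; in particular φ extends to a (1/2)-Hölder continuous map from [0,∞) to L^p(ℝⁿ), and so has a trace in L^p at t = 0. -/

import Mathlib

open MeasureTheory Set ENNReal

/-- The vertical square function norm `‖g‖_{V^p}`. -/
noncomputable def Vnorm (n : ℕ) (p : ℝ)
    (g : ℝ → EuclideanSpace ℝ (Fin n) → ℝ≥0∞) : ℝ≥0∞ :=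
  (∫⁻ x, (∫⁻ t in Ioi (0 : ℝ), (g t x) ^ 2) ^ (p / 2)) ^ (1 / p)

/-- if `2 ≤ p < ∞` and `φ, ∂_tφ ∈ V^p` (the time derivative `ψ` being
realized through the fundamental theorem of calculus), then for all `t > τ > 0`,
`‖φ(t,·) − φ(τ,·)‖_{L^p} ≤ C (t−τ)^{1/2} ‖∂_tφ‖_{V^p}` with `C` depending only on `p`
(and the dimension); in particular `φ` is `1/2`-Hölder continuous with values in `L^p`. -/
theorem stmt2 (n : ℕ) (p : ℝ) (hp : 2 ≤ p) :
    ∃ C : ℝ≥0∞, 0 < C ∧ C < ⊤ ∧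
      ∀ (φ ψ : ℝ → EuclideanSpace ℝ (Fin n) → ℂ),
        Measurable (Function.uncurry φ) → Measurable (Function.uncurry ψ) →
        (∀ x (τ t : ℝ), 0 < τ → τ ≤ t →
          φ t x - φ τ x = ∫ s in τ..t, ψ s x) →
        Vnorm n p (fun t x => (‖φ t x‖₊ : ℝ≥0∞)) < ⊤ →
        Vnorm n p (fun t x => (‖ψ t x‖₊ : ℝ≥0∞)) < ⊤ →
        ∀ (τ t : ℝ), 0 < τ → τ < t →
          eLpNorm (fun x => φ t x - φ τ x) (ENNReal.ofReal p) volume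
            ≤ C * ENNReal.ofReal (Real.sqrt (t - τ)) *
                Vnorm n p (fun s x => (‖ψ s x‖₊ : ℝ≥0∞)) := by
  have hp0 : (0:ℝ) < p := lt_of_lt_of_le two_pos hp
  refine ⟨1, zero_lt_one, one_lt_top, ?_⟩
  intro φ ψ hφm hψm hFTC _hVφ _hVψ τ t hτ hτt
  rw [one_mul]
  have hq0 : ENNReal.ofReal p ≠ 0 := by
    simpa [ENNReal.ofReal_eq_zero, not_le] using hp0
  have hconj : Real.HolderConjugate 2 2 := Real.HolderConjugate.two_two
  -- pointwise bound
  have key : ∀ x, (‖φ t x - φ τ x‖₊ : ℝ≥0∞) ≤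
      ENNReal.ofReal (Real.sqrt (t - τ)) *
        (∫⁻ s in Ioi (0:ℝ), (‖ψ s x‖₊ : ℝ≥0∞) ^ 2) ^ ((1:ℝ)/2) := by
    intro x
    have hmeas : AEMeasurable (fun s => (‖ψ s x‖₊ : ℝ≥0∞))
        (volume.restrict (Ioc τ t)) := by
      exact ((hψm.comp (measurable_id.prodMk measurable_const)).nnnorm.coe_nnreal_ennreal).aemeasurable
    calc (‖φ t x - φ τ x‖₊ : ℝ≥0∞)
        = (‖∫ s in Ioc τ t, ψ s x‖₊ : ℝ≥0∞) := by
          rw [hFTC x τ t hτ hτt.le, intervalIntegral.integral_of_le hτt.le]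
      _ ≤ ∫⁻ s in Ioc τ t, (‖ψ s x‖₊ : ℝ≥0∞) := enorm_integral_le_lintegral_enorm _
      _ ≤ (∫⁻ s in Ioc τ t, (‖ψ s x‖₊ : ℝ≥0∞) ^ 2) ^ ((1:ℝ)/2) *
            (ENNReal.ofReal (t - τ)) ^ ((1:ℝ)/2) := by
          simpa using
            ENNReal.lintegral_mul_le_Lp_mul_Lq (volume.restrict (Ioc τ t)) hconj hmeas
              (aemeasurable_const : AEMeasurable (fun _ : ℝ => (1:ℝ≥0∞)) _)
      _ ≤ (∫⁻ s in Ioi (0:ℝ), (‖ψ s x‖₊ : ℝ≥0∞) ^ 2) ^ ((1:ℝ)/2) *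
            (ENNReal.ofReal (t - τ)) ^ ((1:ℝ)/2) := by
          gcongr
          exact (fun s hs => lt_trans hτ hs.1)
      _ = ENNReal.ofReal (Real.sqrt (t - τ)) *
            (∫⁻ s in Ioi (0:ℝ), (‖ψ s x‖₊ : ℝ≥0∞) ^ 2) ^ ((1:ℝ)/2) := by
          rw [mul_comm, ENNReal.ofReal_rpow_of_nonneg (by linarith) (by norm_num),
            Real.sqrt_eq_rpow]
  -- now integrate
  have hsne : ENNReal.ofReal (Real.sqrt (t - τ)) ≠ ⊤ := ofReal_ne_top
  calc eLpNorm (fun x => φ t x - φ τ x) (ENNReal.ofReal p) volume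
      = (∫⁻ x, (‖φ t x - φ τ x‖₊ : ℝ≥0∞) ^ p) ^ (1/p) := by
        rw [eLpNorm_eq_lintegral_rpow_enorm_toReal hq0 ofReal_ne_top,
          ENNReal.toReal_ofReal hp0.le]
        rfl
    _ ≤ (∫⁻ x, (ENNReal.ofReal (Real.sqrt (t - τ)) *
          (∫⁻ s in Ioi (0:ℝ), (‖ψ s x‖₊ : ℝ≥0∞) ^ 2) ^ ((1:ℝ)/2)) ^ p) ^ (1/p) := by
        gcongr with x
        exact key x
    _ = (ENNReal.ofReal (Real.sqrt (t - τ)) ^ p *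
          ∫⁻ x, (∫⁻ s in Ioi (0:ℝ), (‖ψ s x‖₊ : ℝ≥0∞) ^ 2) ^ (p/2)) ^ (1/p) := by
        rw [← lintegral_const_mul']
        · congr 1
          refine lintegral_congr fun x => ?_
          rw [ENNReal.mul_rpow_of_nonneg _ _ hp0.le, ← ENNReal.rpow_mul]
          ring_nf
        · exact ENNReal.rpow_ne_top_of_nonneg hp0.le hsne
    _ = ENNReal.ofReal (Real.sqrt (t - τ)) *
          Vnorm n p (fun s x => (‖ψ s x‖₊ : ℝ≥0∞)) := by
        rw [ENNReal.mul_rpow_of_nonneg _ _ (by positivity : (0:ℝ) ≤ 1/p),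
          ← ENNReal.rpow_mul, mul_one_div_cancel hp0.ne', ENNReal.rpow_one]
        rfl
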